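/- For any k ≥ 1 and real r with |arg(e^{2πikθ₀})| ≤ π/4 (arguments taken in (−π, π]), one has |r^k e^{2πikθ₀} − 1| ≥ |e^{2πikθ₀} − 1| · cos(arg(e^{2πikθ₀})) ≥ (√2/2)|e^{2πikθ₀} − 1|. -/

import Mathlib

open Complex Real Filter

/-- For any `k ≥ 1` and real `r > 0` with `|arg(e^{2πikθ₀})| ≤ π/4`
(arguments in `(−π, π]`), one has
`|r^k e^{2πikθ₀} − 1| ≥ |e^{2πikθ₀} − 1| · cos(arg(e^{2πikθ₀})) ≥ (√2/2)|e^{2πikθ₀} − 1|`. -/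
theorem stmt1 (θ₀ r : ℝ) (hr : 0 < r) (k : ℕ) (hk : 1 ≤ k)
    (harg : |Complex.arg (Complex.exp (2 * π * Complex.I * ((k : ℝ) * θ₀)))| ≤ π / 4) :
    ‖Complex.exp (2 * π * Complex.I * ((k : ℝ) * θ₀)) - 1‖ *
        Real.cos (Complex.arg (Complex.exp (2 * π * Complex.I * ((k : ℝ) * θ₀)))) ≤
      ‖(r : ℂ) ^ k * Complex.exp (2 * π * Complex.I * ((k : ℝ) * θ₀)) - 1‖ ∧
    Real.sqrt 2 / 2 * ‖Complex.exp (2 * π * Complex.I * ((k : ℝ) * θ₀)) - 1‖ ≤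
      ‖Complex.exp (2 * π * Complex.I * ((k : ℝ) * θ₀)) - 1‖ *
        Real.cos (Complex.arg (Complex.exp (2 * π * Complex.I * ((k : ℝ) * θ₀)))) := by
  set z := Complex.exp (2 * π * Complex.I * ((k : ℝ) * θ₀)) with hzdef
  have hzabs : ‖z‖ = 1 := by
    rw [hzdef, Complex.norm_exp]
    norm_num [Complex.mul_re]
  have hzne : z ≠ 0 := by
    intro h; rw [h] at hzabs; simp at hzabs
  have hcos : Real.cos (Complex.arg z) = z.re := by
    rw [Complex.cos_arg hzne, hzabs, div_one]
  have hnorm : z.re ^ 2 + z.im ^ 2 = 1 := by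
    have h := Complex.sq_norm z
    rw [hzabs, Complex.normSq_apply] at h
    nlinarith [h]
  have hc1 : z.re ≤ 1 := by
    have := Complex.re_le_norm z; rwa [hzabs] at this
  have hs2 : Real.sqrt 2 / 2 ≤ 1 := by
    nlinarith [Real.sq_sqrt (by norm_num : (2:ℝ) ≥ 0), Real.sqrt_nonneg 2]
  have hc2 : Real.sqrt 2 / 2 ≤ z.re := by
    rw [← hcos, ← Real.cos_abs]
    calc Real.sqrt 2 / 2 = Real.cos (π / 4) := Real.cos_pi_div_four.symm
      _ ≤ Real.cos |Complex.arg z| := by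
          apply Real.cos_le_cos_of_nonneg_of_le_pi (abs_nonneg _) _ harg
          linarith [Real.pi_pos]
  have hs2pos : 0 < Real.sqrt 2 / 2 := by positivity
  have hcpos : 0 < z.re := lt_of_lt_of_le hs2pos hc2
  set t := r ^ k with htdef
  have ht : 0 < t := pow_pos hr k
  have hA : ‖z - 1‖ ^ 2 = 2 - 2 * z.re := by
    rw [Complex.sq_norm, Complex.normSq_apply]
    simp only [Complex.sub_re, Complex.sub_im, Complex.one_re, Complex.one_im]
    nlinarith [hnorm]
  have hB : ‖(r : ℂ) ^ k * z - 1‖ ^ 2 = t ^ 2 - 2 * t * z.re + 1 := by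
    rw [Complex.sq_norm, Complex.normSq_apply]
    simp only [Complex.sub_re, Complex.sub_im, Complex.mul_re, Complex.mul_im,
      Complex.one_re, Complex.one_im, ← Complex.ofReal_pow, Complex.ofReal_re,
      Complex.ofReal_im]
    nlinarith [hnorm]
  have hAnn : 0 ≤ ‖z - 1‖ := norm_nonneg _
  have hBnn : 0 ≤ ‖(r : ℂ) ^ k * z - 1‖ := norm_nonneg _
  constructor
  · rw [hcos]
    nlinarith [hA, hB, sq_nonneg (t - z.re), sq_nonneg (1 - z.re),
      mul_pos hcpos hcpos, sq_nonneg (‖(r : ℂ) ^ k * z - 1‖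
        - ‖z - 1‖ * z.re), mul_nonneg hAnn (le_of_lt hcpos),
      mul_nonneg (mul_nonneg hAnn (le_of_lt hcpos)) hBnn]
  · rw [hcos]
    nlinarith [mul_le_mul_of_nonneg_left hc2 hAnn]
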